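/- The set of elements of ℤ_2 of the form (m : ℤ_2) with m ∈ ℤ an integer whose orbit under g_{2,3} is ultimately periodic (i.e. there exist n₀ ∈ ℕ and k ≥ 1 with g_{2,3}^{n₀+k}(m) = g_{2,3}^{n₀}(m)) is dense in ℤ_2. -/
import Mathlib

open scoped Classical

/-- `ε₀(u)`: the unique integer in `{0, 1}` congruent to `u` modulo `2`. -/
noncomputable def eps0 (u : ℤ_[2]) : ℕ := (PadicInt.toZMod u).val

/-- Integer Collatz step. -/
def Tc (m : ℤ) : ℤ := if 2 ∣ m then m / 2 else (3 * m + 1) / 2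

lemma Tc_spec (m : ℤ) : 2 * Tc m = if 2 ∣ m then m else 3 * m + 1 := by
  unfold Tc
  split_ifs with h
  · omega
  · have h2 : (2:ℤ) ∣ 3 * m + 1 := by omega
    omega

/-- Number of odd steps among the first `n` iterates. -/
def Jc : ℕ → ℤ → ℕ
  | 0, _ => 0
  | n+1, m => (if 2 ∣ m then 0 else 1) + Jc n (Tc m)

lemma Tc_even {m : ℤ} (h : 2 ∣ m) : 2 * Tc m = m := by rw [Tc_spec]; simp [h]

lemma Tc_odd {m : ℤ} (h : ¬ 2 ∣ m) : 2 * Tc m = 3 * m + 1 := by rw [Tc_spec]; simp [h]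

lemma Tc_lin : ∀ (n : ℕ) (m t : ℤ),
    Tc^[n] (m + 2 ^ n * t) = Tc^[n] m + 3 ^ (Jc n m) * t := by
  intro n
  induction n with
  | zero => intro m t; simp [Jc]
  | succ n ih =>
    intro m t
    rw [Function.iterate_succ_apply, Function.iterate_succ_apply]
    by_cases h : 2 ∣ m
    · have h1 : Tc (m + 2 ^ (n+1) * t) = Tc m + 2 ^ n * t := by
        have he : 2 ∣ m + 2 ^ (n+1) * t := by
          rcases h with ⟨a, ha⟩; exact ⟨a + 2^n * t, by rw [ha]; ring⟩
        have h2 : 2 * Tc (m + 2 ^ (n+1) * t) = 2 * (Tc m + 2 ^ n * t) := by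
          rw [Tc_even he]; linear_combination -Tc_even h
        omega
      rw [h1, ih, Jc]
      simp [h]
    · have h1 : Tc (m + 2 ^ (n+1) * t) = Tc m + 2 ^ n * (3 * t) := by
        have he : ¬ 2 ∣ m + 2 ^ (n+1) * t := by
          intro ⟨a, ha⟩
          exact h ⟨a - 2^n * t, by rw [show m = 2*a - 2^(n+1)*t by omega]; ring⟩
        have h2 : 2 * Tc (m + 2 ^ (n+1) * t) = 2 * (Tc m + 2 ^ n * (3 * t)) := by
          rw [Tc_odd he]; linear_combination -Tc_odd h
        omega
      rw [h1, ih, Jc]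
      simp [h]
      ring

lemma Tc_pos : ∀ (n : ℕ) (m : ℤ), 1 ≤ m → 1 ≤ Tc^[n] m := by
  intro n
  induction n with
  | zero => intro m hm; simpa using hm
  | succ n ih =>
    intro m hm
    rw [Function.iterate_succ_apply]
    refine ih _ ?_
    by_cases h : 2 ∣ m
    · have := Tc_even h; omega
    · have := Tc_odd h; omega

lemma Tc_three : ∀ (n : ℕ) (m : ℤ), (¬ (3:ℤ) ∣ m ∨ 1 ≤ Jc n m) → ¬ (3:ℤ) ∣ Tc^[n] m := by
  intro n
  induction n with
  | zero =>
    intro m hm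
    simp only [Jc] at hm
    simpa using hm.resolve_right (by omega)
  | succ n ih =>
    intro m hm
    rw [Function.iterate_succ_apply]
    refine ih _ ?_
    by_cases h : 2 ∣ m
    · have h2 := Tc_even h
      simp only [Jc, if_pos h, zero_add] at hm
      rcases hm with hm | hm
      · left; omega
      · right; exact hm
    · left
      have h2 := Tc_odd h
      omega

lemma Jc_zero : ∀ (n : ℕ) (m : ℤ), Jc n m = 0 → 2 ^ n * Tc^[n] m = m := by
  intro n
  induction n with
  | zero => intro m _; simp
  | succ n ih =>
    intro m hm
    by_cases h : 2 ∣ m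
    · simp only [Jc, if_pos h, zero_add] at hm
      rw [Function.iterate_succ_apply]
      have := ih (Tc m) hm
      have h2 := Tc_even h
      rw [pow_succ]
      nlinarith [this, h2]
    · simp [Jc, if_neg h] at hm

lemma Tc_pow2 : ∀ k : ℕ, Tc^[k] ((2:ℤ) ^ k) = 1 := by
  intro k
  induction k with
  | zero => simp
  | succ k ih =>
    rw [Function.iterate_succ_apply]
    have h : Tc ((2:ℤ) ^ (k+1)) = 2 ^ k := by
      have he : (2:ℤ) ∣ 2 ^ (k+1) := ⟨2^k, by ring⟩
      have := Tc_even he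
      have : (2:ℤ) * Tc (2 ^ (k+1)) = 2 * 2 ^ k := by rw [this]; ring
      omega
    rw [h, ih]

lemma Tc_one : Tc (1 : ℤ) = 2 := by
  have := Tc_odd (m := 1) (by omega); omega

lemma Tc_two : Tc (2 : ℤ) = 1 := by
  have := Tc_even (m := 2) (by omega); omega

/-- `2^(2·3^j) = 1 + 3^(j+1)·v` with `3 ∤ v`. -/
lemma two_pow_claimA : ∀ j : ℕ, ∃ v : ℤ, (2:ℤ) ^ (2 * 3 ^ j) = 1 + 3 ^ (j+1) * v ∧ ¬ (3:ℤ) ∣ v := by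
  intro j
  induction j with
  | zero => exact ⟨1, by norm_num, by omega⟩
  | succ j ih =>
    obtain ⟨v, hv, hv3⟩ := ih
    refine ⟨v + 3 ^ (j+1) * v ^ 2 + 3 ^ (2*j+1) * v ^ 3, ?_, ?_⟩
    · have h1 : (2:ℤ) ^ (2 * 3 ^ (j+1)) = ((2:ℤ) ^ (2 * 3 ^ j)) ^ 3 := by
        rw [← pow_mul]; ring_nf
      rw [h1, hv]
      ring
    · intro hd
      apply hv3
      have h1 : (3:ℤ) ∣ 3 ^ (j+1) * v ^ 2 + 3 ^ (2*j+1) * v ^ 3 := by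
        refine dvd_add (Dvd.dvd.mul_right ?_ _) (Dvd.dvd.mul_right ?_ _) <;>
          exact dvd_pow_self 3 (by omega)
      omega

lemma three_not_dvd_two_pow (k : ℕ) : ¬ (3:ℤ) ∣ 2 ^ k := by
  intro h
  have := Int.Prime.dvd_pow' (p := 3) (n := 2) (by norm_num) h
  omega

/-- Every unit mod `3^j` is a power of two. -/
lemma two_pow_claimB : ∀ (j : ℕ) (c : ℤ), ¬ (3:ℤ) ∣ c →
    ∃ k : ℕ, 1 ≤ k ∧ (3:ℤ) ^ j ∣ 2 ^ k - c := by
  intro j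
  induction j with
  | zero => intro c _; exact ⟨1, le_refl _, by simp⟩
  | succ j ih =>
    intro c hc
    match j, ih with
    | 0, _ =>
      have h3 : c % 3 = 1 ∨ c % 3 = 2 := by omega
      rcases h3 with h3 | h3
      · exact ⟨2, by omega, by norm_num; omega⟩
      · exact ⟨1, le_refl _, by norm_num; omega⟩
    | j + 1, ih =>
      obtain ⟨k, hk1, hkd⟩ := ih c hc
      obtain ⟨d, hd⟩ := hkd
      have h2k : (2:ℤ) ^ k = c + 3 ^ (j+1) * d := by linarith
      obtain ⟨v, hA, hv3⟩ := two_pow_claimA j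
      set w : ℤ := (c + 3 ^ (j+1) * d) * v with hw
      clear_value w
      have hwnd : ¬ (3:ℤ) ∣ w := by
        intro h
        rw [hw] at h
        rcases (Int.Prime.dvd_mul' (by norm_num) h) with h | h
        · exact three_not_dvd_two_pow k (h2k ▸ h)
        · exact hv3 h
      have htri : (3:ℤ) ∣ d ∨ (3:ℤ) ∣ d + w ∨ (3:ℤ) ∣ d + 2 * w := by
        clear hw
        have hd3 : d % 3 = 0 ∨ d % 3 = 1 ∨ d % 3 = 2 := by omega
        have hw3 : w % 3 = 1 ∨ w % 3 = 2 := by omega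
        rcases hd3 with h | h | h <;> rcases hw3 with h' | h' <;>
          first
          | (left; omega)
          | (right; left; omega)
          | (right; right; omega)
      rcases htri with ⟨e, he⟩ | ⟨e, he⟩ | ⟨e, he⟩
      · exact ⟨k, hk1, ⟨e, by rw [hd, he]; ring⟩⟩
      · refine ⟨k + 2 * 3 ^ j, by omega, ?_⟩
        have key : (2:ℤ) ^ (k + 2 * 3 ^ j) - c = 3 ^ (j+1) * (d + w) := by
          rw [pow_add, hA, h2k, hw]; ring
        exact ⟨e, by rw [key, he]; ring⟩
      · refine ⟨k + 2 * (2 * 3 ^ j), by omega, ?_⟩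
        have key : (2:ℤ) ^ (k + 2 * (2 * 3 ^ j)) - c
            = 3 ^ (j+1) * (d + 2 * w) + 3 ^ (j+2) * (3 ^ j * v ^ 2 * (c + 3 ^ (j+1) * d)) := by
          rw [show k + 2 * (2 * 3 ^ j) = k + (2 * 3 ^ j + 2 * 3 ^ j) by ring,
            pow_add, pow_add, hA, h2k, hw]
          ring
        exact ⟨e + 3 ^ j * v ^ 2 * (c + 3 ^ (j+1) * d), by
          rw [key, he, show j + 2 = (j+1) + 1 by ring]; ring⟩

lemma padic_two_dvd_iff (m : ℤ) : (2 : ℤ_[2]) ∣ (m : ℤ_[2]) ↔ (2:ℤ) ∣ m := by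
  have h1 : (2 : ℤ_[2]) = ((2:ℕ) : ℤ_[2]) := by norm_cast
  rw [h1, ← PadicInt.norm_lt_one_iff_dvd, PadicInt.norm_int_lt_one_iff_dvd]
  norm_num

lemma g_cast (g : ℤ_[2] → ℤ_[2])
    (hg : ∀ u : ℤ_[2], (2 : ℤ_[2]) * g u =
      if (2 : ℤ_[2]) ∣ u then u
      else (3 : ℤ_[2]) * u + (eps0 (-((3 : ℤ_[2]) * u)) : ℤ_[2])) (m : ℤ) :
    g (m : ℤ_[2]) = ((Tc m : ℤ) : ℤ_[2]) := by
  have h2 : (2 : ℤ_[2]) ≠ 0 := two_ne_zero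
  apply mul_left_cancel₀ h2
  rw [hg]
  by_cases h : (2:ℤ) ∣ m
  · rw [if_pos ((padic_two_dvd_iff m).mpr h)]
    symm
    calc (2:ℤ_[2]) * ((Tc m : ℤ) : ℤ_[2]) = ((2 * Tc m : ℤ) : ℤ_[2]) := by push_cast; ring
      _ = (m : ℤ_[2]) := by rw [Tc_even h]
  · rw [if_neg (fun hh => h ((padic_two_dvd_iff m).mp hh))]
    have heps : eps0 (-((3 : ℤ_[2]) * (m : ℤ_[2]))) = 1 := by
      have hc : (-((3 : ℤ_[2]) * (m : ℤ_[2]))) = ((-(3*m) : ℤ) : ℤ_[2]) := by push_cast; ring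
      unfold eps0
      rw [hc, map_intCast PadicInt.toZMod]
      have h0 : ((-(3*m) : ℤ) : ZMod 2) ≠ 0 := by
        rw [Ne, ZMod.intCast_zmod_eq_zero_iff_dvd]
        omega
      have hv : (((-(3*m) : ℤ) : ZMod 2)).val < 2 := ZMod.val_lt _
      have hv0 : (((-(3*m) : ℤ) : ZMod 2)).val ≠ 0 := by
        intro hh
        exact h0 ((ZMod.val_eq_zero _).mp hh)
      omega
    rw [heps]
    symm
    calc (2:ℤ_[2]) * ((Tc m : ℤ) : ℤ_[2]) = ((2 * Tc m : ℤ) : ℤ_[2]) := by push_cast; ring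
      _ = ((3 * m + 1 : ℤ) : ℤ_[2]) := by rw [Tc_odd h]
      _ = 3 * (m : ℤ_[2]) + ((1:ℕ) : ℤ_[2]) := by push_cast; ring

lemma g_iter (g : ℤ_[2] → ℤ_[2])
    (hg : ∀ u : ℤ_[2], (2 : ℤ_[2]) * g u =
      if (2 : ℤ_[2]) ∣ u then u
      else (3 : ℤ_[2]) * u + (eps0 (-((3 : ℤ_[2]) * u)) : ℤ_[2])) :
    ∀ (N : ℕ) (m : ℤ), g^[N] (m : ℤ_[2]) = ((Tc^[N] m : ℤ) : ℤ_[2]) := by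
  intro N
  induction N with
  | zero => intro m; simp
  | succ N ih =>
    intro m
    rw [Function.iterate_succ_apply, Function.iterate_succ_apply, g_cast g hg m, ih]

/-- The integers whose orbit under `g_{2,3}` is ultimately periodic form a dense
subset of `ℤ_2`. -/
theorem stmt13 (g : ℤ_[2] → ℤ_[2])
    (hg : ∀ u : ℤ_[2], (2 : ℤ_[2]) * g u =
      if (2 : ℤ_[2]) ∣ u then u
      else (3 : ℤ_[2]) * u + (eps0 (-((3 : ℤ_[2]) * u)) : ℤ_[2])) :
    Dense {x : ℤ_[2] | ∃ m : ℤ, (m : ℤ_[2]) = x ∧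
      ∃ n₀ : ℕ, ∃ k ≥ 1, g^[n₀ + k] (m : ℤ_[2]) = g^[n₀] (m : ℤ_[2])} := by
  rw [Metric.dense_iff]
  intro x r hr
  obtain ⟨n, hn⟩ := exists_pow_lt_of_lt_one hr (by norm_num : (1/2:ℝ) < 1)
  obtain ⟨m₀, hm₀⟩ := PadicInt.denseRange_intCast.exists_dist_lt x hr
  have h2npos : (0:ℤ) < 2 ^ n := by positivity
  set m₁ : ℤ := m₀ % 2 ^ n + 2 ^ n with hm₁
  have hm₁a : 2 ^ n ≤ m₁ := by
    have := Int.emod_nonneg m₀ (by positivity : (2:ℤ)^n ≠ 0)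
    omega
  have hm₁b : m₁ < 2 * 2 ^ n := by
    have := Int.emod_lt_of_pos m₀ h2npos
    omega
  have hm₁pos : 1 ≤ m₁ := by omega
  obtain ⟨u, hu⟩ : (2:ℤ) ^ n ∣ m₁ - m₀ := by
    refine ⟨1 - m₀ / 2 ^ n, ?_⟩
    have := Int.mul_ediv_add_emod m₀ ((2:ℤ) ^ n)
    rw [hm₁]; ring_nf; linarith
  set c : ℤ := Tc^[n] m₁ with hc
  have hc1 : 1 ≤ c := Tc_pos n m₁ hm₁pos
  have hc3 : ¬ (3:ℤ) ∣ c := by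
    rcases Nat.eq_zero_or_pos (Jc n m₁) with h | h
    · have h0 := Jc_zero n m₁ h
      have hcle : c < 2 := by nlinarith
      have : c = 1 := by omega
      omega
    · exact Tc_three n m₁ (Or.inr h)
  obtain ⟨k, hk1, hkd⟩ := two_pow_claimB (Jc n m₁) c hc3
  obtain ⟨t, ht⟩ := hkd
  set m : ℤ := m₁ + 2 ^ n * t with hm
  have hTn : Tc^[n] m = 2 ^ k := by
    rw [hm, Tc_lin, ← hc]; linarith
  have hstep : Tc^[n + k] m = 1 := by
    rw [Nat.add_comm, Function.iterate_add_apply, hTn, Tc_pow2]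
  have hper : Tc^[(n + k) + 2] m = 1 := by
    rw [Nat.add_comm (n+k) 2, Function.iterate_add_apply, hstep]
    show Tc (Tc 1) = 1
    rw [Tc_one, Tc_two]
  refine ⟨(m : ℤ_[2]), ?_, ⟨m, rfl, n + k, 2, by omega, ?_⟩⟩
  · rw [Metric.mem_ball, dist_eq_norm]
    have hsplit : (m : ℤ_[2]) - x = ((m : ℤ_[2]) - (m₀ : ℤ_[2])) + ((m₀ : ℤ_[2]) - x) := by ring
    have h1 : ‖(m : ℤ_[2]) - (m₀ : ℤ_[2])‖ < r := by
      have hmm : (m : ℤ_[2]) - (m₀ : ℤ_[2]) = ((2:ℤ_[2]))^n * (((u + t : ℤ)) : ℤ_[2]) := by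
        have hh : ((m - m₀ : ℤ) : ℤ_[2]) = ((2 ^ n * (u + t) : ℤ) : ℤ_[2]) := by
          rw [show m - m₀ = 2 ^ n * (u + t) by rw [hm]; linarith]
        push_cast at hh ⊢
        linear_combination hh
      rw [hmm]
      have hnorm2 : ‖((2:ℤ_[2]))^n‖ = (1/2:ℝ)^n := by
        have : ((2:ℤ_[2])) = ((2:ℕ) : ℤ_[2]) := by norm_cast
        rw [this, PadicInt.norm_p_pow]
        rw [zpow_neg, zpow_natCast]
        rw [one_div, inv_pow]
        norm_num
      calc ‖((2:ℤ_[2]))^n * (((u + t : ℤ)) : ℤ_[2])‖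
          = ‖((2:ℤ_[2]))^n‖ * ‖(((u + t : ℤ)) : ℤ_[2])‖ := norm_mul _ _
        _ ≤ (1/2:ℝ)^n * 1 := by
            rw [hnorm2]
            exact mul_le_mul_of_nonneg_left (PadicInt.norm_le_one _) (by positivity)
        _ < r := by rw [mul_one]; exact hn
    have h2 : ‖(m₀ : ℤ_[2]) - x‖ < r := by
      rw [← dist_eq_norm, dist_comm]
      exact hm₀
    calc ‖(m : ℤ_[2]) - x‖ ≤ max ‖(m : ℤ_[2]) - (m₀ : ℤ_[2])‖ ‖(m₀ : ℤ_[2]) - x‖ := by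
          rw [hsplit]; exact PadicInt.nonarchimedean _ _
      _ < r := max_lt h1 h2
  · rw [g_iter g hg, g_iter g hg, hper, hstep]
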